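/- arXiv:1702.05818 — 4 statements merged into one kernel-verified Lean document; each statement's English description precedes it below -/
import Mathlib

section
/- A Hermitian-preserving linear map Λ on M_n(ℂ) that is diagonalized by an orthogonal Hermitian basis {v_α} with real eigenvalues λ_α (i.e., Λ[v_α] = λ_α v_α) is completely positive if and only if Σ_α (λ_α / Tr(v_α†v_α)) · v̄_α ⊗ v_α ≥ 0 (positive semidefinite as an n²×n² matrix), where v̄_α denotes entrywise complex conjugation. -/
open Matrix BigOperators Kronecker
open scoped ComplexOrder

/-- Complete positivity of a linear map on `M_n(ℂ)`, characterized via Choi's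
theorem: the map is completely positive iff its Choi matrix
`(id ⊗ Λ)[Σ_{ij} e_{ij} ⊗ e_{ij}]` is positive semidefinite. -/
def IsCompletelyPositive {n : ℕ}
    (Λ : Matrix (Fin n) (Fin n) ℂ →ₗ[ℂ] Matrix (Fin n) (Fin n) ℂ) : Prop :=
  (∑ i : Fin n, ∑ j : Fin n,
    (Matrix.single i j (1 : ℂ)) ⊗ₖ Λ (Matrix.single i j 1)).PosSemidef

lemma aux_trace_ne {m : Type*} [Fintype m] [DecidableEq m] (A : Matrix m m ℂ) (hA : A ≠ 0) :
    Matrix.trace (Aᴴ * A) ≠ 0 := by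
  have h : Matrix.trace (Aᴴ * A) = ((∑ j, ∑ i, Complex.normSq (A i j) : ℝ) : ℂ) := by
    push_cast
    simp [Matrix.trace, Matrix.mul_apply, Matrix.diag, Matrix.conjTranspose_apply,
      Complex.normSq_eq_conj_mul_self]
  rw [h, Complex.ofReal_ne_zero]
  have : ∃ i j, A i j ≠ 0 := by
    by_contra hc
    push_neg at hc
    exact hA (by ext i j; simp [hc])
  obtain ⟨i, j, hij⟩ := this
  have hpos : 0 < ∑ j, ∑ i, Complex.normSq (A i j) := by
    apply Finset.sum_pos' (fun _ _ => Finset.sum_nonneg fun _ _ => Complex.normSq_nonneg _)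
    exact ⟨j, Finset.mem_univ _, Finset.sum_pos' (fun _ _ => Complex.normSq_nonneg _)
      ⟨i, Finset.mem_univ _, Complex.normSq_pos.mpr hij⟩⟩
  exact ne_of_gt hpos

lemma aux_expand (n : ℕ)
    (v : Fin (n ^ 2) → Matrix (Fin n) (Fin n) ℂ)
    (hli : LinearIndependent ℂ v)
    (hspan : Submodule.span ℂ (Set.range v) = ⊤)
    (horth : ∀ α β, α ≠ β → Matrix.trace ((v α)ᴴ * v β) = 0)
    (hN : ∀ α, Matrix.trace ((v α)ᴴ * v α) ≠ 0)
    (X : Matrix (Fin n) (Fin n) ℂ) :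
    X = ∑ α, (Matrix.trace ((v α)ᴴ * X) / Matrix.trace ((v α)ᴴ * v α)) • v α := by
  classical
  let B : Module.Basis (Fin (n ^ 2)) ℂ (Matrix (Fin n) (Fin n) ℂ) := Module.Basis.mk hli hspan.ge
  have hB : ∀ α, B α = v α := fun α => Module.Basis.mk_apply hli hspan.ge α
  have hX : X = ∑ β, B.repr X β • v β := by
    conv_lhs => rw [← B.sum_repr X]
    simp [hB]
  have hc : ∀ α, Matrix.trace ((v α)ᴴ * X) = B.repr X α * Matrix.trace ((v α)ᴴ * v α) := by
    intro α
    conv_lhs => rw [hX]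
    rw [Finset.mul_sum, Matrix.trace_sum]
    simp only [Matrix.mul_smul, Matrix.trace_smul, smul_eq_mul]
    rw [Finset.sum_eq_single α]
    · intro β _ hβ; rw [horth α β (Ne.symm hβ)]; ring
    · intro h; exact absurd (Finset.mem_univ α) h
  conv_lhs => rw [hX]
  refine Finset.sum_congr rfl fun α _ => ?_
  rw [hc α, mul_div_assoc, div_self (hN α), mul_one]

lemma aux_std_apply {n : ℕ} (i j a b : Fin n) :
    Matrix.single i j (1 : ℂ) a b = if i = a ∧ j = b then 1 else 0 := rfl

lemma aux_trace_std {n : ℕ} (v : Matrix (Fin n) (Fin n) ℂ) (i j : Fin n) :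
    Matrix.trace (vᴴ * Matrix.single i j 1) = star (v i j) := by
  simp [Matrix.trace, Matrix.mul_apply, aux_std_apply, Matrix.conjTranspose_apply,
    Matrix.diag, ite_and, Finset.sum_ite_eq, Finset.sum_ite_eq']

theorem cp_iff_eigen_sum_posSemidef (n : ℕ)
    (Λ : Matrix (Fin n) (Fin n) ℂ →ₗ[ℂ] Matrix (Fin n) (Fin n) ℂ)
    (hherm : ∀ X : Matrix (Fin n) (Fin n) ℂ, X.IsHermitian → (Λ X).IsHermitian)
    (v : Fin (n ^ 2) → Matrix (Fin n) (Fin n) ℂ)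
    (hli : LinearIndependent ℂ v)
    (hspan : Submodule.span ℂ (Set.range v) = ⊤)
    (hvherm : ∀ α, (v α).IsHermitian)
    (horth : ∀ α β, α ≠ β → Matrix.trace ((v α)ᴴ * v β) = 0)
    (lam : Fin (n ^ 2) → ℝ)
    (hev : ∀ α, Λ (v α) = (lam α : ℂ) • v α) :
    IsCompletelyPositive Λ ↔
      (∑ α, ((lam α : ℂ) / Matrix.trace ((v α)ᴴ * v α)) •
        ((v α).map (starRingEnd ℂ) ⊗ₖ v α)).PosSemidef := by
  classical
  have hN : ∀ α, Matrix.trace ((v α)ᴴ * v α) ≠ 0 :=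
    fun α => aux_trace_ne (v α) (hli.ne_zero α)
  have hΛe : ∀ i j : Fin n, Λ (Matrix.single i j 1) =
      ∑ α, (star (v α i j) * (lam α : ℂ) / Matrix.trace ((v α)ᴴ * v α)) • v α := by
    intro i j
    conv_lhs => rw [aux_expand n v hli hspan horth hN (Matrix.single i j 1)]
    rw [map_sum]
    refine Finset.sum_congr rfl fun α _ => ?_
    rw [_root_.map_smul, hev α, aux_trace_std, smul_smul]
    congr 1
    ring
  have choi : (∑ i : Fin n, ∑ j : Fin n,
      (Matrix.single i j (1 : ℂ)) ⊗ₖ Λ (Matrix.single i j 1)) =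
      ∑ α, ((lam α : ℂ) / Matrix.trace ((v α)ᴴ * v α)) •
        ((v α).map (starRingEnd ℂ) ⊗ₖ v α) := by
    ext ⟨i1, k⟩ ⟨j1, l⟩
    simp only [Matrix.sum_apply, Matrix.kroneckerMap_apply, Matrix.smul_apply,
      aux_std_apply, Matrix.map_apply, smul_eq_mul, ite_mul, one_mul, zero_mul]
    rw [Finset.sum_comm]
    rw [Finset.sum_eq_single j1, Finset.sum_eq_single i1]
    · rw [if_pos ⟨rfl, rfl⟩, hΛe i1 j1, Matrix.sum_apply]
      refine Finset.sum_congr rfl fun α _ => ?_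
      simp only [Matrix.smul_apply, smul_eq_mul]
      simp only [starRingEnd_apply]
      ring
    · intro b _ hb; simp [hb]
    · intro h; exact absurd (Finset.mem_univ i1) h
    · intro b _ hb
      apply Finset.sum_eq_zero; intro i _
      simp [hb]
    · intro h; exact absurd (Finset.mem_univ j1) h
  unfold IsCompletelyPositive
  rw [choi]
end

section
/- For n = 4, let Λ_{KF}[X] = Σ_{i,j=0}^{3} p_{ij} σ_{ij} X σ_{ij} be a trace-preserving KF Gell-Mann map whose coefficients satisfy p̃_{02} = p̃_{12} and p̃_{03} = p̃_{13} ≠ p̃_{23} (where p̃_{kl} := p_{kl}+p_{lk}). Then Λ_{KF}[σ_{22}] = (1−3p̃_{02}−p̃_{03})σ_{22} + (2√3/3)(p̃_{03}−p̃_{23})(e_{33}−e_{22}); in particular, σ_{22} is not an eigenvector of Λ_{KF}. -/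
open Matrix BigOperators

/-- The generalized Gell-Mann matrices on `ℂ^n`:
`gm n a b` is `σ_{ab}` (symmetric for `a < b`, antisymmetric for `a > b`,
diagonal for `a = b > 0`, identity for `a = b = 0`). -/
noncomputable def gm (n : ℕ) (a b : Fin n) : Matrix (Fin n) (Fin n) ℂ :=
  if a < b then Matrix.single a b 1 + Matrix.single b a 1
  else if b < a then (-Complex.I) • (Matrix.single b a 1 - Matrix.single a b 1)
  else if (a : ℕ) = 0 then 1
  else (Real.sqrt (2 / ((a : ℕ) * ((a : ℕ) + 1))) : ℂ) •
    ((∑ i : Fin n, if (i : ℕ) < (a : ℕ) then Matrix.single i i 1 else 0)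
      - ((a : ℕ) : ℂ) • Matrix.single a a 1)

section aux

private lemma sq2 : (Real.sqrt 2 : ℂ) * (Real.sqrt 2 : ℂ) = 2 := by
  norm_cast; exact Real.mul_self_sqrt (by norm_num)

private lemma sq3 : (Real.sqrt 3 : ℂ) * (Real.sqrt 3 : ℂ) = 3 := by
  norm_cast; exact Real.mul_self_sqrt (by norm_num)

private lemma s3ne : (Real.sqrt 3 : ℂ) ≠ 0 := by
  norm_cast; positivity

private lemma s2ne : (Real.sqrt 2 : ℂ) ≠ 0 := by
  norm_cast; positivity

private lemma gmfin : ∀ V : ℕ → ℕ → Prop, (∀ a b : Fin 4, V a b) → True := fun _ _ => trivial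

private lemma g00 : gm 4 0 0 = 1 := by simp [gm]

private lemma g01 : gm 4 0 1 = !![0,1,0,0;1,0,0,0;0,0,0,0;0,0,0,0] := by
  ext a b
  fin_cases a <;> fin_cases b <;>
    simp [gm, Matrix.single, Fin.ext_iff, Matrix.vecHead, Matrix.vecTail,
      show ((0:Fin 4):ℕ) = 0 from rfl, show ((1:Fin 4):ℕ) = 1 from rfl,
      show ((2:Fin 4):ℕ) = 2 from rfl, show ((3:Fin 4):ℕ) = 3 from rfl]

private lemma g02 : gm 4 0 2 = !![0,0,1,0;0,0,0,0;1,0,0,0;0,0,0,0] := by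
  ext a b
  fin_cases a <;> fin_cases b <;>
    simp [gm, Matrix.single, Fin.ext_iff, Matrix.vecHead, Matrix.vecTail,
      show ((0:Fin 4):ℕ) = 0 from rfl, show ((1:Fin 4):ℕ) = 1 from rfl,
      show ((2:Fin 4):ℕ) = 2 from rfl, show ((3:Fin 4):ℕ) = 3 from rfl]

private lemma g03 : gm 4 0 3 = !![0,0,0,1;0,0,0,0;0,0,0,0;1,0,0,0] := by
  ext a b
  fin_cases a <;> fin_cases b <;>
    simp [gm, Matrix.single, Fin.ext_iff, Matrix.vecHead, Matrix.vecTail,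
      show ((0:Fin 4):ℕ) = 0 from rfl, show ((1:Fin 4):ℕ) = 1 from rfl,
      show ((2:Fin 4):ℕ) = 2 from rfl, show ((3:Fin 4):ℕ) = 3 from rfl]

private lemma g12 : gm 4 1 2 = !![0,0,0,0;0,0,1,0;0,1,0,0;0,0,0,0] := by
  ext a b
  fin_cases a <;> fin_cases b <;>
    simp [gm, Matrix.single, Fin.ext_iff, Matrix.vecHead, Matrix.vecTail,
      show ((0:Fin 4):ℕ) = 0 from rfl, show ((1:Fin 4):ℕ) = 1 from rfl,
      show ((2:Fin 4):ℕ) = 2 from rfl, show ((3:Fin 4):ℕ) = 3 from rfl]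

private lemma g13 : gm 4 1 3 = !![0,0,0,0;0,0,0,1;0,0,0,0;0,1,0,0] := by
  ext a b
  fin_cases a <;> fin_cases b <;>
    simp [gm, Matrix.single, Fin.ext_iff, Matrix.vecHead, Matrix.vecTail,
      show ((0:Fin 4):ℕ) = 0 from rfl, show ((1:Fin 4):ℕ) = 1 from rfl,
      show ((2:Fin 4):ℕ) = 2 from rfl, show ((3:Fin 4):ℕ) = 3 from rfl]

private lemma g23 : gm 4 2 3 = !![0,0,0,0;0,0,0,0;0,0,0,1;0,0,1,0] := by
  ext a b
  fin_cases a <;> fin_cases b <;>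
    simp [gm, Matrix.single, Fin.ext_iff, Matrix.vecHead, Matrix.vecTail,
      show ((0:Fin 4):ℕ) = 0 from rfl, show ((1:Fin 4):ℕ) = 1 from rfl,
      show ((2:Fin 4):ℕ) = 2 from rfl, show ((3:Fin 4):ℕ) = 3 from rfl]

private lemma g10 : gm 4 1 0 = !![0,-Complex.I,0,0;Complex.I,0,0,0;0,0,0,0;0,0,0,0] := by
  ext a b
  fin_cases a <;> fin_cases b <;>
    simp [gm, Matrix.single, Fin.ext_iff, Matrix.vecHead, Matrix.vecTail,
      show ((0:Fin 4):ℕ) = 0 from rfl, show ((1:Fin 4):ℕ) = 1 from rfl,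
      show ((2:Fin 4):ℕ) = 2 from rfl, show ((3:Fin 4):ℕ) = 3 from rfl]

private lemma g20 : gm 4 2 0 = !![0,0,-Complex.I,0;0,0,0,0;Complex.I,0,0,0;0,0,0,0] := by
  ext a b
  fin_cases a <;> fin_cases b <;>
    simp [gm, Matrix.single, Fin.ext_iff, Matrix.vecHead, Matrix.vecTail,
      show ((0:Fin 4):ℕ) = 0 from rfl, show ((1:Fin 4):ℕ) = 1 from rfl,
      show ((2:Fin 4):ℕ) = 2 from rfl, show ((3:Fin 4):ℕ) = 3 from rfl]

private lemma g30 : gm 4 3 0 = !![0,0,0,-Complex.I;0,0,0,0;0,0,0,0;Complex.I,0,0,0] := by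
  ext a b
  fin_cases a <;> fin_cases b <;>
    simp [gm, Matrix.single, Fin.ext_iff, Matrix.vecHead, Matrix.vecTail,
      show ((0:Fin 4):ℕ) = 0 from rfl, show ((1:Fin 4):ℕ) = 1 from rfl,
      show ((2:Fin 4):ℕ) = 2 from rfl, show ((3:Fin 4):ℕ) = 3 from rfl]

private lemma g21 : gm 4 2 1 = !![0,0,0,0;0,0,-Complex.I,0;0,Complex.I,0,0;0,0,0,0] := by
  ext a b
  fin_cases a <;> fin_cases b <;>
    simp [gm, Matrix.single, Fin.ext_iff, Matrix.vecHead, Matrix.vecTail,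
      show ((0:Fin 4):ℕ) = 0 from rfl, show ((1:Fin 4):ℕ) = 1 from rfl,
      show ((2:Fin 4):ℕ) = 2 from rfl, show ((3:Fin 4):ℕ) = 3 from rfl]

private lemma g31 : gm 4 3 1 = !![0,0,0,0;0,0,0,-Complex.I;0,0,0,0;0,Complex.I,0,0] := by
  ext a b
  fin_cases a <;> fin_cases b <;>
    simp [gm, Matrix.single, Fin.ext_iff, Matrix.vecHead, Matrix.vecTail,
      show ((0:Fin 4):ℕ) = 0 from rfl, show ((1:Fin 4):ℕ) = 1 from rfl,
      show ((2:Fin 4):ℕ) = 2 from rfl, show ((3:Fin 4):ℕ) = 3 from rfl]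

private lemma g32 : gm 4 3 2 = !![0,0,0,0;0,0,0,0;0,0,0,-Complex.I;0,0,Complex.I,0] := by
  ext a b
  fin_cases a <;> fin_cases b <;>
    simp [gm, Matrix.single, Fin.ext_iff, Matrix.vecHead, Matrix.vecTail,
      show ((0:Fin 4):ℕ) = 0 from rfl, show ((1:Fin 4):ℕ) = 1 from rfl,
      show ((2:Fin 4):ℕ) = 2 from rfl, show ((3:Fin 4):ℕ) = 3 from rfl]

private lemma g11 : gm 4 1 1 = !![1,0,0,0;0,-1,0,0;0,0,0,0;0,0,0,0] := by
  ext a b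
  fin_cases a <;> fin_cases b <;>
    simp [gm, Matrix.single, Fin.sum_univ_four, Matrix.sum_apply,
      Matrix.vecHead, Matrix.vecTail,
      show ((0:Fin 4):ℕ) = 0 from rfl, show ((1:Fin 4):ℕ) = 1 from rfl,
      show ((2:Fin 4):ℕ) = 2 from rfl, show ((3:Fin 4):ℕ) = 3 from rfl,
      show (1+1:ℝ) = 2 by norm_num] <;> norm_num

private lemma g22 : gm 4 2 2 = ((Real.sqrt 3 : ℂ)/3) • !![1,0,0,0;0,1,0,0;0,0,-2,0;0,0,0,0] := by
  have key : (Real.sqrt 2:ℂ) / (Real.sqrt 2 * Real.sqrt 3) = Real.sqrt 3 / 3 := by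
    rw [div_eq_div_iff (by simp [s2ne, s3ne]) (by norm_num)]
    linear_combination (-(Real.sqrt 2 : ℂ)) * sq3
  ext a b
  fin_cases a <;> fin_cases b <;>
    simp [gm, Matrix.single, Fin.ext_iff, Fin.sum_univ_four, Matrix.sum_apply,
      Matrix.vecHead, Matrix.vecTail,
      show ((0:Fin 4):ℕ) = 0 from rfl, show ((1:Fin 4):ℕ) = 1 from rfl,
      show ((2:Fin 4):ℕ) = 2 from rfl, show ((3:Fin 4):ℕ) = 3 from rfl,
      show (2+1:ℝ) = 3 by norm_num] <;>
    simp [key] <;> ring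

private lemma g33 : gm 4 3 3 =
    ((Real.sqrt 2 : ℂ) * Real.sqrt 3 / 6) • !![1,0,0,0;0,1,0,0;0,0,1,0;0,0,0,-3] := by
  have key : (Real.sqrt 2:ℂ) / (Real.sqrt 3 * 2) = Real.sqrt 2 * Real.sqrt 3 / 6 := by
    rw [div_eq_div_iff (by simp [s3ne]) (by norm_num)]
    linear_combination (-2 : ℂ) * (Real.sqrt 2 : ℂ) * sq3
  ext a b
  fin_cases a <;> fin_cases b <;>
    simp [gm, Matrix.single, Fin.ext_iff, Fin.sum_univ_four, Matrix.sum_apply,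
      Matrix.vecHead, Matrix.vecTail,
      show ((0:Fin 4):ℕ) = 0 from rfl, show ((1:Fin 4):ℕ) = 1 from rfl,
      show ((2:Fin 4):ℕ) = 2 from rfl, show ((3:Fin 4):ℕ) = 3 from rfl,
      show Real.sqrt (3+1) = 2 by
        rw [show (3+1:ℝ) = 4 by norm_num, show (4:ℝ)=2^2 by norm_num, Real.sqrt_sq] <;> norm_num] <;>
    simp [key] <;> ring

end aux

private lemma s2p : (Real.sqrt 2 : ℂ)^2 = 2 := by rw [pow_two]; exact sq2
private lemma s3p : (Real.sqrt 3 : ℂ)^2 = 3 := by rw [pow_two]; exact sq3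
private lemma s3c : (Real.sqrt 3 : ℂ)^3 = 3 * Real.sqrt 3 := by
  rw [pow_succ, s3p]


set_option maxHeartbeats 4000000 in
theorem KF_gellMann_four_not_EV (p : Fin 4 → Fin 4 → ℝ)
    (hTP : ∀ X : Matrix (Fin 4) (Fin 4) ℂ,
        Matrix.trace (∑ i, ∑ j, (p i j : ℂ) • (gm 4 i j * X * gm 4 i j)) = Matrix.trace X)
    (h02 : p 0 2 + p 2 0 = p 1 2 + p 2 1)
    (h03 : p 0 3 + p 3 0 = p 1 3 + p 3 1)
    (hne : p 0 3 + p 3 0 ≠ p 2 3 + p 3 2) :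
    (∑ i, ∑ j, (p i j : ℂ) • (gm 4 i j * gm 4 2 2 * gm 4 i j)) =
        ((1 - 3 * (p 0 2 + p 2 0) - (p 0 3 + p 3 0) : ℝ) : ℂ) • gm 4 2 2 +
        ((2 * Real.sqrt 3 / 3 * ((p 0 3 + p 3 0) - (p 2 3 + p 3 2)) : ℝ) : ℂ) •
          (Matrix.single 3 3 (1 : ℂ) - Matrix.single 2 2 (1 : ℂ)) ∧
    ¬ ∃ c : ℂ, (∑ i, ∑ j, (p i j : ℂ) • (gm 4 i j * gm 4 2 2 * gm 4 i j)) = c • gm 4 2 2 := by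
  have h02C : ((p 0 2 : ℂ) + p 2 0) = (p 1 2 : ℂ) + p 2 1 := by
    exact_mod_cast congrArg Complex.ofReal h02
  have h03C : ((p 0 3 : ℂ) + p 3 0) = (p 1 3 : ℂ) + p 3 1 := by
    exact_mod_cast congrArg Complex.ofReal h03
  have KEY : (∑ i, ∑ j, (p i j : ℂ) • (gm 4 i j * gm 4 2 2 * gm 4 i j)) =
        ((1 - 3 * (p 0 2 + p 2 0) - (p 0 3 + p 3 0) : ℝ) : ℂ) • gm 4 2 2 +
        ((2 * Real.sqrt 3 / 3 * ((p 0 3 + p 3 0) - (p 2 3 + p 3 2)) : ℝ) : ℂ) •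
          (Matrix.single 3 3 (1 : ℂ) - Matrix.single 2 2 (1 : ℂ)) := by
    have h0 := hTP !![1,0,0,0;0,0,0,0;0,0,0,0;0,0,0,0]
    have h2 := hTP !![0,0,0,0;0,0,0,0;0,0,1,0;0,0,0,0]
    simp only [Fin.sum_univ_four, g00,g01,g02,g03,g10,g11,g12,g13,g20,g21,g22,g23,
      g30,g31,g32,g33] at h0 h2
    simp [Matrix.trace, Matrix.diag, Matrix.mul_apply, Fin.sum_univ_four, Matrix.sum_apply,
      Matrix.vecHead, Matrix.vecTail] at h0 h2
    ring_nf at h0 h2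
    simp only [Complex.I_sq, s2p, s3p, s3c] at h0 h2
    ext a b
    simp only [Fin.sum_univ_four, g00,g01,g02,g03,g10,g11,g12,g13,g20,g21,g22,g23,
      g30,g31,g32,g33]
    fin_cases a <;> fin_cases b <;>
    · simp [Matrix.mul_apply, Fin.sum_univ_four, Matrix.sum_apply, Matrix.vecHead, Matrix.vecTail,
        Matrix.single, Fin.ext_iff,
        show ((0:Fin 4):ℕ) = 0 from rfl, show ((1:Fin 4):ℕ) = 1 from rfl,
        show ((2:Fin 4):ℕ) = 2 from rfl, show ((3:Fin 4):ℕ) = 3 from rfl]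
      try (push_cast; ring_nf; simp only [Complex.I_sq, s2p, s3p, s3c]
           first
           | linear_combination ((Real.sqrt 3:ℂ)/3) * h0
           | linear_combination ((Real.sqrt 3:ℂ)/3) * h0 + (2*(Real.sqrt 3:ℂ)/3) * h02C
           | linear_combination (-2*(Real.sqrt 3:ℂ)/3) * h2 + (-(Real.sqrt 3:ℂ)) * h02C
           | linear_combination (-(Real.sqrt 3:ℂ)/3) * h03C)
  refine ⟨KEY, ?_⟩
  rintro ⟨c, hc⟩
  have h33 := congrFun (congrFun (hc.symm.trans KEY) 3) 3
  simp [g22, Matrix.single, Fin.ext_iff, Matrix.vecHead, Matrix.vecTail,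
    show ((2:Fin 4):ℕ) = 2 from rfl, show ((3:Fin 4):ℕ) = 3 from rfl] at h33
  have hre : p 0 3 + p 3 0 - (p 2 3 + p 3 2) = 0 := by exact_mod_cast h33
  exact hne (by linarith)
end

section
/- For n = 3, let L_{LF}[X] = Σ_{i,j=0}^{2} γ_{ij}(σ_{ij}Xσ_{ij} − ½{σ_{ij}²,X}) be the GKSL generator with Gell-Mann noise operators. Then L_{LF}[σ_{22}] = −½[√3(γ̃_{02}−γ̃_{12})σ_{11} + 3(γ̃_{02}+γ̃_{12})σ_{22}], where γ̃_{kl} := γ_{kl}+γ_{lk}; consequently σ_{22} is an eigenvector of L_{LF} if and only if γ_{02}+γ_{20} = γ_{12}+γ_{21}. -/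
open Matrix BigOperators

lemma gm00 : gm 3 0 0 = 1 := by simp [gm]
lemma gm01 : gm 3 0 1 = !![0,1,0;1,0,0;0,0,0] := by
  ext i j; fin_cases i <;> fin_cases j <;>
    simp [gm, Matrix.single, Matrix.vecHead, Matrix.vecTail]
lemma gm02 : gm 3 0 2 = !![0,0,1;0,0,0;1,0,0] := by
  ext i j; fin_cases i <;> fin_cases j <;>
    simp [gm, Matrix.single, Matrix.vecHead, Matrix.vecTail]
lemma gm10 : gm 3 1 0 = !![0,-Complex.I,0;Complex.I,0,0;0,0,0] := by
  ext i j; fin_cases i <;> fin_cases j <;>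
    simp [gm, Matrix.single, Matrix.vecHead, Matrix.vecTail]
lemma gm12 : gm 3 1 2 = !![0,0,0;0,0,1;0,1,0] := by
  ext i j; fin_cases i <;> fin_cases j <;>
    simp [gm, Matrix.single, Matrix.vecHead, Matrix.vecTail]
lemma gm20 : gm 3 2 0 = !![0,0,-Complex.I;0,0,0;Complex.I,0,0] := by
  ext i j; fin_cases i <;> fin_cases j <;>
    simp [gm, Matrix.single, Matrix.vecHead, Matrix.vecTail]
lemma gm21 : gm 3 2 1 = !![0,0,0;0,0,-Complex.I;0,Complex.I,0] := by
  ext i j; fin_cases i <;> fin_cases j <;>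
    simp [gm, Matrix.single, Matrix.vecHead, Matrix.vecTail]
lemma gm11 : gm 3 1 1 = !![1,0,0;0,-1,0;0,0,0] := by
  ext i j; fin_cases i <;> fin_cases j <;>
    simp [gm, Fin.sum_univ_three, Matrix.single, Matrix.vecHead, Matrix.vecTail] <;>
    · rw [show ((1:ℝ)+1) = 2 by norm_num, div_self]
      simp [Real.sqrt_ne_zero'.mpr (by norm_num : (0:ℝ) < 2)]
lemma gm22 : gm 3 2 2 = (((Real.sqrt 3 : ℝ) : ℂ))⁻¹ • !![1,0,0;0,1,0;0,0,-2] := by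
  have h2 : ((Real.sqrt 2 : ℝ) : ℂ) ≠ 0 := by
    simp [Real.sqrt_ne_zero'.mpr (by norm_num : (0:ℝ) < 2)]
  ext i j; fin_cases i <;> fin_cases j <;>
    simp [gm, Fin.sum_univ_three, Matrix.single, Matrix.vecHead, Matrix.vecTail] <;>
    rw [show ((2:ℝ)+1) = 3 by norm_num, ← div_div, div_self h2, one_div]

noncomputable def M02 : Matrix (Fin 3) (Fin 3) ℂ :=
  (((Real.sqrt 3 : ℝ) : ℂ))⁻¹ • !![-3,0,0;0,0,0;0,0,3]
noncomputable def M12 : Matrix (Fin 3) (Fin 3) ℂ :=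
  (((Real.sqrt 3 : ℝ) : ℂ))⁻¹ • !![0,0,0;0,-3,0;0,0,3]

noncomputable def Dis (A : Matrix (Fin 3) (Fin 3) ℂ) : Matrix (Fin 3) (Fin 3) ℂ :=
  A * gm 3 2 2 * A - (1/2 : ℂ) • (A * A * gm 3 2 2 + gm 3 2 2 * (A * A))

lemma d00 : Dis (gm 3 0 0) = 0 := by
  ext i j; fin_cases i <;> fin_cases j <;>
    simp [Dis, gm00, gm22, Matrix.mul_apply, Fin.sum_univ_three, Matrix.vecHead, Matrix.vecTail] <;> ring
lemma d01 : Dis (gm 3 0 1) = 0 := by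
  ext i j; fin_cases i <;> fin_cases j <;>
    simp [Dis, gm01, gm22, Matrix.mul_apply, Fin.sum_univ_three, Matrix.vecHead, Matrix.vecTail] <;> ring
lemma d10 : Dis (gm 3 1 0) = 0 := by
  ext i j; fin_cases i <;> fin_cases j <;>
    simp [Dis, gm10, gm22, Matrix.mul_apply, Fin.sum_univ_three, Matrix.vecHead, Matrix.vecTail] <;> ring_nf <;> simp [Complex.I_sq] <;> ring
lemma d11 : Dis (gm 3 1 1) = 0 := by
  ext i j; fin_cases i <;> fin_cases j <;>
    simp [Dis, gm11, gm22, Matrix.mul_apply, Fin.sum_univ_three, Matrix.vecHead, Matrix.vecTail] <;> ring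
lemma d22 : Dis (gm 3 2 2) = 0 := by
  ext i j; fin_cases i <;> fin_cases j <;>
    simp [Dis, gm22, Matrix.mul_apply, Fin.sum_univ_three, Matrix.vecHead, Matrix.vecTail] <;> ring
lemma d02 : Dis (gm 3 0 2) = M02 := by
  ext i j; fin_cases i <;> fin_cases j <;>
    simp [Dis, M02, gm02, gm22, Matrix.mul_apply, Fin.sum_univ_three, Matrix.vecHead, Matrix.vecTail] <;> ring
lemma d20 : Dis (gm 3 2 0) = M02 := by
  ext i j; fin_cases i <;> fin_cases j <;>
    simp [Dis, M02, gm20, gm22, Matrix.mul_apply, Fin.sum_univ_three, Matrix.vecHead, Matrix.vecTail] <;> ring_nf <;> simp [Complex.I_sq] <;> ring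
lemma d12 : Dis (gm 3 1 2) = M12 := by
  ext i j; fin_cases i <;> fin_cases j <;>
    simp [Dis, M12, gm12, gm22, Matrix.mul_apply, Fin.sum_univ_three, Matrix.vecHead, Matrix.vecTail] <;> ring
lemma d21 : Dis (gm 3 2 1) = M12 := by
  ext i j; fin_cases i <;> fin_cases j <;>
    simp [Dis, M12, gm21, gm22, Matrix.mul_apply, Fin.sum_univ_three, Matrix.vecHead, Matrix.vecTail] <;> ring_nf <;> simp [Complex.I_sq] <;> ring


set_option maxHeartbeats 1000000 in
theorem LF_gellMann_three_sigma22 (γ : Fin 3 → Fin 3 → ℝ) :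
    let L : Matrix (Fin 3) (Fin 3) ℂ → Matrix (Fin 3) (Fin 3) ℂ := fun X =>
      ∑ i, ∑ j, (γ i j : ℂ) •
        (gm 3 i j * X * gm 3 i j
          - (1 / 2 : ℂ) • (gm 3 i j * gm 3 i j * X + X * (gm 3 i j * gm 3 i j)))
    L (gm 3 2 2) = (-(1 / 2) : ℂ) •
        (((Real.sqrt 3 * ((γ 0 2 + γ 2 0) - (γ 1 2 + γ 2 1)) : ℝ) : ℂ) • gm 3 1 1 +
          ((3 * ((γ 0 2 + γ 2 0) + (γ 1 2 + γ 2 1)) : ℝ) : ℂ) • gm 3 2 2) ∧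
      ((∃ c : ℂ, L (gm 3 2 2) = c • gm 3 2 2) ↔ γ 0 2 + γ 2 0 = γ 1 2 + γ 2 1) := by
  intro L
  have hs : ((Real.sqrt 3 : ℝ) : ℂ) ≠ 0 := by
    simp [Real.sqrt_ne_zero'.mpr (by norm_num : (0:ℝ) < 3)]
  have hs2 : ((Real.sqrt 3 : ℝ) : ℂ) * ((Real.sqrt 3 : ℝ) : ℂ) = 3 := by
    rw [← Complex.ofReal_mul, Real.mul_self_sqrt (by norm_num)]; norm_num
  have hp2 : ((Real.sqrt 3 : ℝ) : ℂ) ^ 2 = 3 := by rw [sq, hs2]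
  have hp4 : ((Real.sqrt 3 : ℝ) : ℂ) ^ 4 = 9 := by
    rw [show (4:ℕ) = 2*2 from rfl, pow_mul, hp2]; norm_num
  have hLval : L (gm 3 2 2) = (γ 0 2 : ℂ) • M02 + (γ 2 0 : ℂ) • M02
      + (γ 1 2 : ℂ) • M12 + (γ 2 1 : ℂ) • M12 := by
    show (∑ i, ∑ j, (γ i j : ℂ) • Dis (gm 3 i j)) = _
    rw [Fin.sum_univ_three]
    rw [Fin.sum_univ_three, Fin.sum_univ_three, Fin.sum_univ_three]
    rw [d00, d01, d02, d10, d11, d12, d20, d21, d22]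
    simp only [smul_zero, add_zero, zero_add]
    abel
  have part1 : L (gm 3 2 2) = (-(1 / 2) : ℂ) •
      (((Real.sqrt 3 * ((γ 0 2 + γ 2 0) - (γ 1 2 + γ 2 1)) : ℝ) : ℂ) • gm 3 1 1 +
        ((3 * ((γ 0 2 + γ 2 0) + (γ 1 2 + γ 2 1)) : ℝ) : ℂ) • gm 3 2 2) := by
    rw [hLval]
    ext i j
    fin_cases i <;> fin_cases j <;>
      simp [M02, M12, gm11, gm22, Matrix.vecHead, Matrix.vecTail] <;>
      field_simp <;> ring_nf <;> simp only [hp2, hp4] <;> ring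
  refine ⟨part1, ?_, ?_⟩
  · rintro ⟨c, hc⟩
    rw [hLval] at hc
    have h00 := congrFun (congrFun hc 0) 0
    have h11 := congrFun (congrFun hc 1) 1
    simp [M02, M12, gm22, Matrix.vecHead, Matrix.vecTail] at h00 h11
    -- h00 : γ02-stuff = c * √3⁻¹ ; h11 similar
    have key : ((γ 0 2 : ℂ) + γ 2 0) = ((γ 1 2 : ℂ) + γ 2 1) := by
      have heq := h00.trans h11.symm
      field_simp at heq
      have h3s : (3 * ((Real.sqrt 3 : ℝ) : ℂ)) ≠ 0 := by
        exact mul_ne_zero (by norm_num) hs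
      refine mul_left_cancel₀ h3s ?_
      linear_combination (-3 * ((Real.sqrt 3 : ℝ) : ℂ)) * heq
    have : ((γ 0 2 + γ 2 0 : ℝ) : ℂ) = ((γ 1 2 + γ 2 1 : ℝ) : ℂ) := by push_cast; exact key
    exact_mod_cast this
  · intro h
    refine ⟨(-(3:ℂ)/2) * ((γ 0 2 + γ 2 0 + (γ 1 2 + γ 2 1) : ℝ) : ℂ), ?_⟩
    rw [part1, show (γ 0 2 + γ 2 0) - (γ 1 2 + γ 2 1) = 0 by linarith]
    push_cast
    rw [mul_zero, zero_smul, zero_add, smul_smul]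
    ring_nf
end

section
/- Suppose nonnegative reals p̃_{kl} (0 ≤ k < l ≤ n−1) satisfy the 'column-constant' condition p̃_{jl} = p̃_{kl} =: p̃_l for all j, k < l. Then the trace-preservation recurrence p_{jj} = (j/(2(j−1)))[2Σ_{0<l<j} p_{ll}/(l(l+1)) − Σ_{l<j} p̃_{lj} − Σ_{j<l<n} p̃_{jl} + Σ_{0<l<n} p̃_{0l}] for 1 < j < n is solved by p_{kk} = p_{11} + ½(p̃_1 + Σ_{0<j<k} p̃_j − k·p̃_k). -/
open BigOperators Finset

lemma sumA (q : ℕ → ℝ) (c : ℝ) : ∀ k : ℕ, 1 ≤ k →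
    ∑ l ∈ Finset.Ico 1 k,
      (c + (1/2) * (q 1 + (∑ j ∈ Finset.Ico 1 l, q j) - (l:ℝ) * q l)) /
        ((l:ℝ) * ((l:ℝ) + 1))
    = (c + q 1 / 2) * (1 - 1/(k:ℝ)) - (∑ j ∈ Finset.Ico 1 k, q j) / (2*(k:ℝ)) := by
  intro k hk
  induction k with
  | zero => omega
  | succ k ih =>
    rcases Nat.lt_or_ge k 1 with h | h
    · interval_cases k
      simp
    · rw [Finset.sum_Ico_succ_top h, ih h, Finset.sum_Ico_succ_top h]
      have hk0 : (k:ℝ) ≠ 0 := by positivity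
      have hk1 : (k:ℝ) + 1 ≠ 0 := by positivity
      field_simp
      push_cast
      ring

theorem TP_recurrence_solution (n : ℕ) (hn : 3 ≤ n)
    (pt : ℕ → ℕ → ℝ) (p : ℕ → ℝ)
    (hnonneg : ∀ k l, k < l → l < n → 0 ≤ pt k l)
    (hcol : ∀ j k l, j < l → k < l → l < n → pt j l = pt k l)
    (hrec : ∀ j, 1 < j → j < n →
      p j = (j : ℝ) / (2 * ((j : ℝ) - 1)) *
        (2 * ∑ l ∈ Finset.Ico 1 j, p l / ((l : ℝ) * ((l : ℝ) + 1))
          - ∑ l ∈ Finset.range j, pt l j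
          - ∑ l ∈ Finset.Ico (j + 1) n, pt j l
          + ∑ l ∈ Finset.Ico 1 n, pt 0 l)) :
    ∀ k, 1 ≤ k → k < n →
      p k = p 1 + (1 / 2) *
        (pt 0 1 + (∑ j ∈ Finset.Ico 1 k, pt 0 j) - (k : ℝ) * pt 0 k) := by
  intro k
  induction k using Nat.strong_induction_on with
  | _ k ih =>
    intro hk1 hkn
    rcases eq_or_lt_of_le hk1 with h1 | h1
    · rw [← h1]; simp
    · have hrk := hrec k h1 hkn
      have e1 : ∑ l ∈ Finset.range k, pt l k = (k:ℝ) * pt 0 k := by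
        rw [Finset.sum_congr rfl
          (fun l hl => hcol l 0 k (Finset.mem_range.mp hl) (by omega) hkn)]
        simp [mul_comm]
      have e2 : ∑ l ∈ Finset.Ico (k+1) n, pt k l = ∑ l ∈ Finset.Ico (k+1) n, pt 0 l :=
        Finset.sum_congr rfl (fun l hl => by
          obtain ⟨ha, hb⟩ := Finset.mem_Ico.mp hl
          exact hcol k 0 l (by omega) (by omega) hb)
      have e3 : ∑ l ∈ Finset.Ico 1 (k+1), pt 0 l + ∑ l ∈ Finset.Ico (k+1) n, pt 0 l
          = ∑ l ∈ Finset.Ico 1 n, pt 0 l :=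
        Finset.sum_Ico_consecutive _ (by omega) (by omega)
      have e4 : ∑ l ∈ Finset.Ico 1 k, p l / ((l:ℝ) * ((l:ℝ) + 1))
          = ∑ l ∈ Finset.Ico 1 k,
              (p 1 + (1/2) * (pt 0 1 + (∑ j ∈ Finset.Ico 1 l, pt 0 j) - (l:ℝ) * pt 0 l)) /
                ((l:ℝ) * ((l:ℝ) + 1)) :=
        Finset.sum_congr rfl (fun l hl => by
          obtain ⟨ha, hb⟩ := Finset.mem_Ico.mp hl
          rw [ih l hb ha (by omega)])
      rw [e1, e2, e4, sumA (fun j => pt 0 j) (p 1) k (by omega), ← e3,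
        Finset.sum_Ico_succ_top (by omega : 1 ≤ k)] at hrk
      rw [hrk]
      have hk0 : (k:ℝ) ≠ 0 := by positivity
      have hkm1 : (k:ℝ) - 1 ≠ 0 := by
        have : (1:ℝ) < (k:ℝ) := by exact_mod_cast h1
        linarith
      field_simp
      ring
end
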